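/- The torsion subgroup of Γ/S is finite and its order is not divisible by the characteristic of k; that is, if char k = p > 0, then p does not divide the order of the torsion subgroup of Γ/S. -/

import Mathlib

/-- `k` a field, `Γ = ℤⁿ`, `σ` an alternating bicharacter with radical `S`.
The torsion subgroup of `Γ/S` is finite and its order is not divisible by `char k`. -/
theorem stmt_13 {k : Type*} [Field k] {n : ℕ}
    (σ : (Fin n → ℤ) → (Fin n → ℤ) → kˣ)
    (halt : ∀ α, σ α α = 1)
    (hmul₁ : ∀ α β γ, σ (α + β) γ = σ α γ * σ β γ)
    (hmul₂ : ∀ α β γ, σ α (β + γ) = σ α β * σ α γ)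
    (S : AddSubgroup (Fin n → ℤ))
    (hS : ∀ α, α ∈ S ↔ ∀ β, σ α β = 1) :
    Finite (AddCommGroup.torsion ((Fin n → ℤ) ⧸ S)) ∧
      ∀ p : ℕ, p ≠ 0 → CharP k p →
        ¬ p ∣ Nat.card (AddCommGroup.torsion ((Fin n → ℤ) ⧸ S)) := by
  set G := (Fin n → ℤ) ⧸ S with hG
  set T := AddCommGroup.torsion G with hT
  -- `G` is finitely generated
  haveI hGfg : AddGroup.FG G := by
    have : AddGroup.FG (Fin n → ℤ) := Module.Finite.iff_addGroup_fg.mp inferInstance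
    exact AddGroup.fg_of_surjective (f := QuotientAddGroup.mk' S)
      (QuotientAddGroup.mk'_surjective S)
  haveI : Module.Finite ℤ G := Module.Finite.iff_addGroup_fg.mpr hGfg
  haveI : IsNoetherian ℤ G := inferInstance
  -- `T` is finitely generated as a subgroup of a Noetherian module
  have hTfg : AddGroup.FG T := by
    have h1 : (AddSubgroup.toIntSubmodule T).FG := IsNoetherian.noetherian _
    have h2 : T.FG := by
      have := (Submodule.fg_iff_addSubgroup_fg (AddSubgroup.toIntSubmodule T)).mp h1
      rwa [AddSubgroup.toIntSubmodule_toAddSubgroup] at this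
    exact (AddGroup.fg_iff_addSubgroup_fg T).mpr h2
  -- `T` is a torsion group
  have hTtor : AddMonoid.IsTorsion T := fun x => by
    have hx : IsOfFinAddOrder (x : G) := x.2
    rw [← addOrderOf_pos_iff] at hx ⊢
    rwa [AddSubgroup.addOrderOf_coe] at hx
  have hfin : Finite T := AddCommGroup.finite_of_fg_torsion T hTtor
  refine ⟨hfin, ?_⟩
  intro p hp0 hchar hdvd
  -- p is prime
  have hpp : p.Prime := (CharP.char_is_prime_or_zero k p).resolve_right hp0
  haveI : Fact p.Prime := ⟨hpp⟩
  haveI := Fintype.ofFinite T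
  rw [Nat.card_eq_fintype_card] at hdvd
  -- Cauchy: an element of order p
  obtain ⟨x, hx⟩ := exists_prime_addOrderOf_dvd_card (G := T) p hdvd
  have hxg : addOrderOf (x : G) = p := by rw [AddSubgroup.addOrderOf_coe]; exact hx
  -- lift to Γ
  obtain ⟨α, hα⟩ := QuotientAddGroup.mk'_surjective S (x : G)
  have hps : p • α ∈ S := by
    have : p • (x : G) = 0 := by
      rw [← hxg]; exact addOrderOf_nsmul_eq_zero _
    rw [← hα] at this
    have : (QuotientAddGroup.mk' S) (p • α) = 0 := by
      rw [map_nsmul]; exact this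
    rwa [← QuotientAddGroup.ker_mk' S, AddMonoidHom.mem_ker]
  have hαS : α ∉ S := by
    intro hmem
    have : (x : G) = 0 := by
      rw [← hα]
      rwa [← AddMonoidHom.mem_ker, QuotientAddGroup.ker_mk' S]
    have : addOrderOf (x : G) = 1 := by rw [this, addOrderOf_zero]
    rw [hxg] at this
    exact hpp.one_lt.ne' this
  -- σ(0, β) = 1
  have hzero : ∀ β, σ 0 β = 1 := by
    intro β
    have := hmul₁ 0 0 β
    rw [add_zero] at this
    exact left_eq_mul.mp this
  -- σ(m • α, β) = σ(α, β) ^ m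
  have hpow : ∀ (m : ℕ) (β), σ (m • α) β = (σ α β) ^ m := by
    intro m β
    induction m with
    | zero => simpa using hzero β
    | succ m ih =>
      rw [succ_nsmul, hmul₁, ih, pow_succ]
  -- derive contradiction: α ∈ S
  apply hαS
  rw [hS]
  intro β
  have h1 : (σ α β) ^ p = 1 := by
    rw [← hpow]
    exact (hS _).mp hps β
  have h2 : ((σ α β : k)) ^ p = 1 := by
    have := congrArg (Units.val) h1
    simpa using this
  have h3 : ((σ α β : k) - 1) ^ p = 0 := by
    rw [sub_pow_char, h2, one_pow, sub_self]
  have h4 : (σ α β : k) = 1 := sub_eq_zero.mp (pow_eq_zero_iff hp0 |>.mp h3)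
  exact Units.ext h4
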